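/- With the commutative chiral symbol b_{γ2}(ξ) = −12b₀⁴k³(δ₁k)(δ₂k)iξ₂⁴ + 2b₀³k²(δ₁₂k)iξ₂² + 6b₀³k(δ₁k)(δ₂k)iξ₂² − (1/2)b₀²(δ₁₂k)i, where b₀ = (1+ξ₁²+k²ξ₂²)⁻¹, the integral ∫_{ℝ²} b_{γ2}(ξ) dξ₁dξ₂ = 0. -/

import Mathlib

open Real MeasureTheory

/-- `b₀(ξ₁,ξ₂) = (1 + ξ₁² + k²ξ₂²)⁻¹`. -/
noncomputable def b0 (k ξ1 ξ2 : ℝ) : ℝ := (1 + ξ1 ^ 2 + k ^ 2 * ξ2 ^ 2)⁻¹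

section Auxiliary

open Filter

lemma u_pos' (k ξ1 ξ2 : ℝ) : 0 < 1 + ξ1 ^ 2 + k ^ 2 * ξ2 ^ 2 := by positivity

lemma b0_pos' (k ξ1 ξ2 : ℝ) : 0 < b0 k ξ1 ξ2 := by unfold b0; positivity

/-- The real part of the integrand. -/
noncomputable def FF (k d1 d2 d12 : ℝ) (p : ℝ × ℝ) : ℝ :=
  -12 * (b0 k p.1 p.2) ^ 4 * k ^ 3 * d1 * d2 * p.2 ^ 4
    + 2 * (b0 k p.1 p.2) ^ 3 * k ^ 2 * d12 * p.2 ^ 2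
    + 6 * (b0 k p.1 p.2) ^ 3 * k * d1 * d2 * p.2 ^ 2
    - (1 / 2) * (b0 k p.1 p.2) ^ 2 * d12

/-- `|F| ≤ C₀/k · b₀²`. -/
lemma F_bound1 (k d1 d2 d12 : ℝ) (hk : 0 < k) (p : ℝ × ℝ) :
    |FF k d1 d2 d12 p| ≤ ((18 * |d1 * d2| + 3 * k * |d12|) / k) * (b0 k p.1 p.2) ^ 2 := by
  set b := b0 k p.1 p.2 with hb
  have hbpos : 0 < b := b0_pos' k p.1 p.2
  set x := b * (k ^ 2 * p.2 ^ 2) with hx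
  have hx0 : 0 ≤ x := by positivity
  have hx1 : x ≤ 1 := by
    rw [hx, hb]; unfold b0
    rw [inv_mul_le_iff₀ (u_pos' k p.1 p.2)]
    nlinarith [sq_nonneg p.1]
  have hexp : k * FF k d1 d2 d12 p =
      b ^ 2 * (-12 * (d1 * d2) * x ^ 2 + (2 * d12 * k + 6 * (d1 * d2)) * x - d12 * k / 2) := by
    unfold FF
    rw [← hb, hx]
    ring
  rw [div_mul_eq_mul_div, le_div_iff₀ hk]
  have h0 : |FF k d1 d2 d12 p| * k = |k * FF k d1 d2 d12 p| := by
    rw [abs_mul, abs_of_pos hk]; ring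
  rw [h0, hexp, abs_mul, abs_of_nonneg (by positivity : (0:ℝ) ≤ b ^ 2)]
  have hinner : |(-12 * (d1 * d2) * x ^ 2 + (2 * d12 * k + 6 * (d1 * d2)) * x - d12 * k / 2)|
      ≤ 18 * |d1 * d2| + 3 * k * |d12| := by
    have tri : |(-12 * (d1 * d2) * x ^ 2 + (2 * d12 * k + 6 * (d1 * d2)) * x - d12 * k / 2)|
        ≤ |(-12 * (d1 * d2) * x ^ 2)| + |(2 * d12 * k + 6 * (d1 * d2)) * x| + |d12 * k / 2| := by
      calc _ ≤ |(-12 * (d1 * d2) * x ^ 2 + (2 * d12 * k + 6 * (d1 * d2)) * x)| + |d12 * k / 2| :=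
            abs_sub _ _
        _ ≤ _ := by gcongr; exact abs_add_le _ _
    refine tri.trans ?_
    have e1 : |(-12 * (d1 * d2) * x ^ 2)| = 12 * |d1 * d2| * x ^ 2 := by
      rw [abs_mul, abs_mul]
      rw [abs_of_nonneg (by positivity : (0:ℝ) ≤ x ^ 2)]
      norm_num
    have e2 : |(2 * d12 * k + 6 * (d1 * d2)) * x| ≤ (2 * |d12| * k + 6 * |d1 * d2|) * x := by
      rw [abs_mul, abs_of_nonneg hx0]
      gcongr
      calc |2 * d12 * k + 6 * (d1 * d2)| ≤ |2 * d12 * k| + |6 * (d1 * d2)| := abs_add_le _ _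
        _ = 2 * |d12| * k + 6 * |d1 * d2| := by
            rw [abs_mul, abs_mul, abs_mul, abs_of_pos hk]; norm_num
    have e3 : |d12 * k / 2| = |d12| * k / 2 := by
      rw [abs_div, abs_mul, abs_of_pos hk]; norm_num
    rw [e1, e3]
    have hx2 : x ^ 2 ≤ 1 := by nlinarith
    nlinarith [mul_nonneg (abs_nonneg (d1 * d2)) (sub_nonneg.2 hx2),
      mul_nonneg (mul_nonneg (abs_nonneg d12) hk.le) (sub_nonneg.2 hx1),
      mul_nonneg (abs_nonneg d12) hk.le]
  calc b ^ 2 * |_| ≤ b ^ 2 * (18 * |d1 * d2| + 3 * k * |d12|) := by gcongr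
    _ = _ := by ring

/-- `b₀² ≤ C₁ · (1+‖p‖)⁻³`. -/
lemma b0_sq_bound (k : ℝ) (hk : 0 < k) (p : ℝ × ℝ) :
    (b0 k p.1 p.2) ^ 2 ≤ (4 * (min 1 (k ^ 2) + 1) ^ 2 / (min 1 (k ^ 2)) ^ 2)
      * ((1 + ‖p‖) ^ (3 : ℕ))⁻¹ := by
  set m := min 1 (k ^ 2) with hm
  have hm0 : 0 < m := by positivity
  have hm1 : m ≤ 1 := min_le_left _ _
  have hmk : m ≤ k ^ 2 := min_le_right _ _
  set r := ‖p‖ with hr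
  have hr0 : 0 ≤ r := norm_nonneg p
  set u := 1 + p.1 ^ 2 + k ^ 2 * p.2 ^ 2 with hu
  have hu1 : 1 ≤ u := by nlinarith [sq_nonneg p.1, sq_nonneg p.2]
  have hru : m * r ^ 2 ≤ u := by
    have h1 : r = max |p.1| |p.2| := by
      rw [hr, Prod.norm_def, Real.norm_eq_abs, Real.norm_eq_abs]
    have h2 : r ^ 2 ≤ p.1 ^ 2 + p.2 ^ 2 := by
      rw [h1]
      rcases max_cases |p.1| |p.2| with ⟨h, _⟩ | ⟨h, _⟩ <;> rw [h] <;>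
        nlinarith [sq_abs p.1, sq_abs p.2, sq_nonneg p.1, sq_nonneg p.2]
    nlinarith [sq_nonneg p.2, sq_nonneg p.1, mul_le_mul_of_nonneg_left h2 hm0.le]
  have step1 : m * (1 + r) ^ 2 ≤ 2 * (m + 1) * u := by
    nlinarith [mul_nonneg hm0.le (sq_nonneg (1 - r)), mul_nonneg hm0.le (sub_nonneg.2 hu1)]
  have step2 : m ^ 2 * ((1 + r) ^ 2) ^ 2 ≤ (2 * (m + 1) * u) ^ 2 := by
    nlinarith [mul_self_le_mul_self (by positivity : (0:ℝ) ≤ m * (1 + r) ^ 2) step1]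
  have key : (1 + r) ^ 3 * m ^ 2 ≤ 4 * (m + 1) ^ 2 * u ^ 2 := by
    have h4 : (1 + r) ^ 3 ≤ (1 + r) ^ 4 := by
      apply pow_le_pow_right₀ (by linarith) (by norm_num)
    nlinarith [step2, sq_nonneg (1 + r)]
  have hb : b0 k p.1 p.2 = u⁻¹ := rfl
  have h1r : (0:ℝ) < (1 + r) ^ 3 := by positivity
  rw [hb, div_mul_eq_mul_div, le_div_iff₀ (by positivity : (0:ℝ) < m ^ 2), inv_pow,
    inv_mul_le_iff₀ (by positivity : (0:ℝ) < u ^ 2)]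
  have heq : u ^ 2 * (4 * (m + 1) ^ 2 * ((1 + r) ^ 3)⁻¹)
      = u ^ 2 * (4 * (m + 1) ^ 2) / (1 + r) ^ 3 := by
    ring
  rw [heq, le_div_iff₀ h1r]
  nlinarith [key]

lemma FF_continuous (k d1 d2 d12 : ℝ) : Continuous (FF k d1 d2 d12) := by
  have hcb : Continuous fun p : ℝ × ℝ => b0 k p.1 p.2 := by
    unfold b0
    exact Continuous.inv₀ (by fun_prop) fun p => (u_pos' k p.1 p.2).ne'
  unfold FF
  fun_prop

lemma FF_integrable (k d1 d2 d12 : ℝ) (hk : 0 < k) :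
    Integrable (FF k d1 d2 d12) := by
  set C : ℝ := ((18 * |d1 * d2| + 3 * k * |d12|) / k)
    * (4 * (min 1 (k ^ 2) + 1) ^ 2 / (min 1 (k ^ 2)) ^ 2) with hC
  have hC0 : 0 ≤ C := by positivity
  have hint : Integrable (fun p : ℝ × ℝ => C * (1 + ‖p‖) ^ (-(3:ℝ))) :=
    (integrable_one_add_norm (by simp; norm_num)).const_mul C
  refine hint.mono (FF_continuous k d1 d2 d12).aestronglyMeasurable (ae_of_all _ fun p => ?_)
  have hrpow : (1 + ‖p‖) ^ (-(3:ℝ)) = ((1 + ‖p‖) ^ (3:ℕ))⁻¹ := by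
    rw [Real.rpow_neg (by positivity), ← Real.rpow_natCast (1 + ‖p‖) 3]
    norm_num
  have hnn : (0:ℝ) ≤ (1 + ‖p‖) ^ (-(3:ℝ)) := by positivity
  rw [Real.norm_eq_abs, Real.norm_eq_abs, abs_of_nonneg (mul_nonneg hC0 hnn), hrpow]
  calc |FF k d1 d2 d12 p|
      ≤ ((18 * |d1 * d2| + 3 * k * |d12|) / k) * (b0 k p.1 p.2) ^ 2 :=
        F_bound1 k d1 d2 d12 hk p
    _ ≤ ((18 * |d1 * d2| + 3 * k * |d12|) / k)
        * ((4 * (min 1 (k ^ 2) + 1) ^ 2 / (min 1 (k ^ 2)) ^ 2) * ((1 + ‖p‖) ^ (3:ℕ))⁻¹) := by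
        gcongr
        exact b0_sq_bound k hk p
    _ = C * ((1 + ‖p‖) ^ (3:ℕ))⁻¹ := by rw [hC]; ring

/-- The antiderivative in the second variable. -/
noncomputable def GG (k d1 d2 d12 ξ1 : ℝ) (y : ℝ) : ℝ :=
  2 * k * d1 * d2 * (b0 k ξ1 y) ^ 3 * y ^ 3 - (1 / 2) * d12 * (b0 k ξ1 y) ^ 2 * y

lemma GG_hasDerivAt (k d1 d2 d12 ξ1 : ℝ) (y : ℝ) :
    HasDerivAt (GG k d1 d2 d12 ξ1) (FF k d1 d2 d12 (ξ1, y)) y := by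
  have hu : HasDerivAt (fun y : ℝ => 1 + ξ1 ^ 2 + k ^ 2 * y ^ 2) (k ^ 2 * (2 * y ^ 1)) y :=
    (((hasDerivAt_pow 2 y).const_mul (k ^ 2)).const_add (1 + ξ1 ^ 2))
  have hb : HasDerivAt (fun y : ℝ => b0 k ξ1 y)
      (-(k ^ 2 * (2 * y ^ 1)) / (1 + ξ1 ^ 2 + k ^ 2 * y ^ 2) ^ 2) y := hu.inv (u_pos' k ξ1 y).ne'
  have h1 : HasDerivAt (fun y : ℝ => 2 * k * d1 * d2 * ((b0 k ξ1 y) ^ 3 * y ^ 3))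
      (2 * k * d1 * d2 * ((3 * (b0 k ξ1 y) ^ 2
          * (-(k ^ 2 * (2 * y ^ 1)) / (1 + ξ1 ^ 2 + k ^ 2 * y ^ 2) ^ 2)) * y ^ 3
        + (b0 k ξ1 y) ^ 3 * (3 * y ^ 2))) y :=
    (((hb.pow 3).mul (hasDerivAt_pow 3 y)).const_mul _)
  have h2 : HasDerivAt (fun y : ℝ => (1 / 2) * d12 * ((b0 k ξ1 y) ^ 2 * y))
      ((1 / 2) * d12 * ((2 * (b0 k ξ1 y) ^ 1
          * (-(k ^ 2 * (2 * y ^ 1)) / (1 + ξ1 ^ 2 + k ^ 2 * y ^ 2) ^ 2)) * y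
        + (b0 k ξ1 y) ^ 2 * 1)) y :=
    (((hb.pow 2).mul (hasDerivAt_id y)).const_mul _)
  have h := h1.sub h2
  have hGG : GG k d1 d2 d12 ξ1 = fun y : ℝ =>
      2 * k * d1 * d2 * ((b0 k ξ1 y) ^ 3 * y ^ 3) - (1 / 2) * d12 * ((b0 k ξ1 y) ^ 2 * y) := by
    funext y; unfold GG; ring
  rw [hGG]
  refine h.congr_deriv ?_
  have hupos := u_pos' k ξ1 y
  unfold FF b0
  field_simp
  ring

lemma yb_tendsto (k ξ1 : ℝ) (hk : 0 < k) (l : Filter ℝ)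
    (hl : Tendsto (fun y : ℝ => |y|) l atTop) :
    Tendsto (fun y : ℝ => y * b0 k ξ1 y) l (nhds 0) := by
  apply squeeze_zero_norm' (a := fun y : ℝ => (k ^ 2)⁻¹ * |y|⁻¹)
  · filter_upwards [hl.eventually_ge_atTop 1] with y hy
    have hy0 : (0:ℝ) < |y| := by linarith
    have hy0' : y ≠ 0 := by
      intro h; rw [h] at hy0; simp at hy0
    have h1 : b0 k ξ1 y ≤ (k ^ 2 * y ^ 2)⁻¹ := by
      unfold b0
      apply inv_anti₀ (by positivity)
      nlinarith [sq_nonneg ξ1]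
    have hbpos : 0 < b0 k ξ1 y := b0_pos' k ξ1 y
    calc ‖y * b0 k ξ1 y‖ = |y| * b0 k ξ1 y := by
          rw [norm_mul, Real.norm_eq_abs, Real.norm_eq_abs, abs_of_pos hbpos]
      _ ≤ |y| * (k ^ 2 * y ^ 2)⁻¹ := by gcongr
      _ = (k ^ 2)⁻¹ * |y|⁻¹ := by
          field_simp
          exact sq_abs y
  · have := (tendsto_inv_atTop_zero.comp hl).const_mul ((k:ℝ) ^ 2)⁻¹
    simpa using this

lemma b_tendsto (k ξ1 : ℝ) (hk : 0 < k) (l : Filter ℝ)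
    (hl : Tendsto (fun y : ℝ => |y|) l atTop) :
    Tendsto (fun y : ℝ => b0 k ξ1 y) l (nhds 0) := by
  have hu : Tendsto (fun y : ℝ => 1 + ξ1 ^ 2 + k ^ 2 * y ^ 2) l atTop := by
    apply tendsto_atTop_add_const_left
    have h2 : Tendsto (fun y : ℝ => y ^ 2) l atTop := by
      have := (tendsto_pow_atTop (two_ne_zero)).comp hl
      simpa [Function.comp_def, sq_abs] using this
    exact h2.const_mul_atTop (by positivity)
  exact tendsto_inv_atTop_zero.comp hu

lemma GG_tendsto (k d1 d2 d12 ξ1 : ℝ) (hk : 0 < k) (l : Filter ℝ)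
    (hl : Tendsto (fun y : ℝ => |y|) l atTop) :
    Tendsto (GG k d1 d2 d12 ξ1) l (nhds 0) := by
  have hG : GG k d1 d2 d12 ξ1 = fun y =>
      2 * k * d1 * d2 * (y * b0 k ξ1 y) ^ 3
        - (1 / 2) * d12 * ((y * b0 k ξ1 y) * b0 k ξ1 y) := by
    funext y; unfold GG; ring
  rw [hG]
  have h1 := yb_tendsto k ξ1 hk l hl
  have h2 := b_tendsto k ξ1 hk l hl
  have := (((h1.pow 3).const_mul (2 * k * d1 * d2)).sub
    ((h1.mul h2).const_mul ((1 / 2) * d12)))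
  simpa using this

lemma inner_zero (k d1 d2 d12 ξ1 : ℝ) (hk : 0 < k)
    (hint : Integrable (fun y => FF k d1 d2 d12 (ξ1, y))) :
    ∫ y : ℝ, FF k d1 d2 d12 (ξ1, y) = 0 := by
  have h := MeasureTheory.integral_of_hasDerivAt_of_tendsto
    (fun y => GG_hasDerivAt k d1 d2 d12 ξ1 y) hint
    (GG_tendsto k d1 d2 d12 ξ1 hk atBot tendsto_abs_atBot_atTop)
    (GG_tendsto k d1 d2 d12 ξ1 hk atTop tendsto_abs_atTop_atTop)
  simpa using h

lemma FF_integral_zero (k d1 d2 d12 : ℝ) (hk : 0 < k) :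
    (∫ p : ℝ × ℝ, FF k d1 d2 d12 p) = 0 := by
  have hint := FF_integrable k d1 d2 d12 hk
  rw [MeasureTheory.Measure.volume_eq_prod] at hint ⊢
  rw [MeasureTheory.integral_prod _ hint]
  have hae : ∀ᵐ x : ℝ, (∫ y : ℝ, FF k d1 d2 d12 (x, y)) = 0 := by
    filter_upwards [hint.prod_right_ae] with x hx
    exact inner_zero k d1 d2 d12 x hk hx
  rw [integral_congr_ae hae]
  simp

end Auxiliary

/-- The integral over `ℝ²` of the commutative chiral symbol
`b_{γ2}(ξ) = −12b₀⁴k³(δ₁k)(δ₂k)iξ₂⁴ + 2b₀³k²(δ₁₂k)iξ₂² + 6b₀³k(δ₁k)(δ₂k)iξ₂²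
− (1/2)b₀²(δ₁₂k)i` vanishes.  Here `k > 0` and `d1 = δ₁k`, `d2 = δ₂k`,
`d12 = δ₁₂k` are fixed real numbers, and the integrand is `ℂ`-valued. -/
theorem commutative_chiral_integral (k d1 d2 d12 : ℝ) (hk : 0 < k) :
    (∫ p : ℝ × ℝ,
        ((-12 * (b0 k p.1 p.2) ^ 4 * k ^ 3 * d1 * d2 * p.2 ^ 4
            + 2 * (b0 k p.1 p.2) ^ 3 * k ^ 2 * d12 * p.2 ^ 2
            + 6 * (b0 k p.1 p.2) ^ 3 * k * d1 * d2 * p.2 ^ 2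
            - (1 / 2) * (b0 k p.1 p.2) ^ 2 * d12 : ℝ) : ℂ) * Complex.I)
      = 0 := by
  have h : (∫ p : ℝ × ℝ, ((FF k d1 d2 d12 p : ℝ) : ℂ) * Complex.I) = 0 := by
    rw [MeasureTheory.integral_mul_const]
    rw [show (∫ a : ℝ × ℝ, ((FF k d1 d2 d12 a : ℝ) : ℂ))
        = ((∫ a : ℝ × ℝ, FF k d1 d2 d12 a : ℝ) : ℂ) from integral_ofReal]
    rw [FF_integral_zero k d1 d2 d12 hk]
    simp
  exact h
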